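/- Let n ≥ 0 be an integer and let f(x) = x^{2n}. Then there exist polynomials r₁, r₂ ∈ ℂ[z] of degree at most n−1 such that for all x ∈ ℂ with x ≠ 0, (M₁f)(x) = x^{2n} + r₁(x²) and (M₂f)(x) = (2n−1)·x^{2n} + r₂(x²). In particular M₁ and M₂ stabilize the space of polynomials of degree n in the grid variable λ_x = x². -/

import Mathlib

open Polynomial

noncomputable def ab : ℕ → Polynomial ℂ × Polynomial ℂ
  | 0 => (2, 0)
  | n + 1 =>
      ((X + 1) * (ab n).1 + 2 * X * (ab n).2,
       (X + 1) * (ab n).2 + 2 * (ab n).1)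

lemma ab_zero : ab 0 = (2, 0) := rfl

lemma ab_succ (n : ℕ) : ab (n + 1) =
    ((X + 1) * (ab n).1 + 2 * X * (ab n).2,
     (X + 1) * (ab n).2 + 2 * (ab n).1) := rfl

lemma ab_eval (n : ℕ) (x : ℂ) :
    (x + 1) ^ (2 * n) + (x - 1) ^ (2 * n) = (ab n).1.eval (x ^ 2) ∧
    (x + 1) ^ (2 * n) - (x - 1) ^ (2 * n) = x * (ab n).2.eval (x ^ 2) := by
  induction n with
  | zero => norm_num [ab_zero]
  | succ n ih =>
      obtain ⟨h1, h2⟩ := ih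
      have e1 : 2 * (n + 1) = 2 * n + 2 := by ring
      constructor
      · rw [e1, ab_succ]
        simp only [eval_add, eval_mul, eval_ofNat, eval_X, eval_one, pow_add]
        linear_combination (x ^ 2 + 1) * h1 + 2 * x * h2
      · rw [e1, ab_succ]
        simp only [eval_add, eval_mul, eval_ofNat, eval_X, eval_one, pow_add]
        linear_combination 2 * x * h1 + (x ^ 2 + 1) * h2

lemma two_eq_C : (2 : Polynomial ℂ) = C 2 := (map_ofNat C 2).symm

lemma degX1 : (X + 1 : Polynomial ℂ).degree = 1 := by
  simpa using degree_X_add_C (1 : ℂ)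

lemma degCmul (a : ℂ) (p : Polynomial ℂ) : (C a * p).degree ≤ p.degree := by
  rcases eq_or_ne a 0 with rfl | h
  · simp
  · rw [degree_C_mul h]

lemma withbot_aux (d : WithBot ℕ) (n : ℕ) (h : d < n) : 1 + d ≤ (n : WithBot ℕ) := by
  induction d using WithBot.recBotCoe with
  | bot => simp
  | coe m =>
      have h1 : m < n := WithBot.coe_lt_coe.mp h
      have h2 : (1 + m : ℕ) ≤ n := by omega
      rw [← WithBot.coe_one, ← WithBot.coe_add]
      exact WithBot.coe_le_coe.mpr h2

lemma ab_deg (n : ℕ) : (ab n).1.degree ≤ (n : WithBot ℕ) ∧ (ab n).2.degree < (n : WithBot ℕ) := by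
  induction n with
  | zero =>
      rw [ab_zero]
      refine ⟨?_, ?_⟩
      · rw [two_eq_C]; exact_mod_cast degree_C_le
      · rw [Polynomial.degree_zero]; exact_mod_cast WithBot.bot_lt_coe 0
  | succ n ih =>
      obtain ⟨ha, hb⟩ := ih
      rw [ab_succ]
      have hcast : 1 + (n : WithBot ℕ) = ((n + 1 : ℕ) : WithBot ℕ) := by
        rw [← WithBot.coe_one, ← WithBot.coe_natCast, ← WithBot.coe_add, add_comm]
        rfl
      have hXa : ((X + 1) * (ab n).1).degree ≤ ((n + 1 : ℕ) : WithBot ℕ) := by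
        rw [degree_mul, degX1, ← hcast]
        exact add_le_add_right ha 1
      have hXb : (2 * X * (ab n).2).degree ≤ (n : WithBot ℕ) := by
        rw [degree_mul, two_eq_C, degree_C_mul (by norm_num : (2:ℂ) ≠ 0), degree_X]
        exact withbot_aux _ _ hb
      constructor
      · refine (degree_add_le _ _).trans (max_le hXa (hXb.trans ?_))
        exact_mod_cast Nat.cast_le.mpr (Nat.le_succ n)
      · refine (degree_add_le _ _).trans_lt (max_lt ?_ ?_)
        · rw [degree_mul, degX1, ← hcast]
          exact WithBot.add_lt_add_left (by simp) hb
        · calc (2 * (ab n).1).degree ≤ (ab n).1.degree := by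
                rw [two_eq_C, degree_C_mul (by norm_num : (2:ℂ) ≠ 0)]
            _ ≤ (n : WithBot ℕ) := ha
            _ < ((n + 1 : ℕ) : WithBot ℕ) := by exact_mod_cast Nat.lt_succ_self n

lemma ab_coeff_a (n : ℕ) : (ab n).1.coeff n = 2 := by
  induction n with
  | zero => rw [ab_zero, two_eq_C]; simp
  | succ n ih =>
      have h1 : (ab n).1.coeff (n + 1) = 0 :=
        coeff_eq_zero_of_degree_lt ((ab_deg n).1.trans_lt (by exact_mod_cast Nat.lt_succ_self n))
      have h2 : (ab n).2.coeff n = 0 :=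
        coeff_eq_zero_of_degree_lt (ab_deg n).2
      rw [ab_succ]
      simp only [coeff_add, add_mul, one_mul, mul_assoc, two_eq_C, coeff_C_mul, coeff_X_mul]
      rw [ih, h1, h2]
      ring

lemma ab_coeff_b (n : ℕ) : (ab (n + 1)).2.coeff n = 4 * (n + 1 : ℂ) := by
  induction n with
  | zero =>
      rw [ab_succ, ab_zero]
      norm_num [two_eq_C]
  | succ n ih =>
      have h1 : (ab (n + 1)).2.coeff (n + 1) = 0 :=
        coeff_eq_zero_of_degree_lt (ab_deg (n + 1)).2
      have h2 : (ab (n + 1)).1.coeff (n + 1) = 2 := ab_coeff_a (n + 1)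
      rw [ab_succ (n + 1)]
      simp only [coeff_add, add_mul, one_mul, two_eq_C, coeff_C_mul]
      rw [coeff_X_mul, ih, h1, h2]
      push_cast; ring

lemma degree_lt_of (p : Polynomial ℂ) (n : ℕ) (h1 : p.degree ≤ n) (h2 : p.coeff n = 0) :
    p.degree < n := by
  rw [degree_lt_iff_coeff_zero]
  intro m hm
  have hm' : n ≤ m := by exact_mod_cast hm
  rcases eq_or_lt_of_le hm' with rfl | h
  · exact h2
  · exact coeff_eq_zero_of_degree_lt (h1.trans_lt (by exact_mod_cast h))

theorem stmt4 (n : ℕ) (f : ℂ → ℂ) (hf : ∀ x : ℂ, f x = x ^ (2 * n)) :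
    ∃ r₁ r₂ : Polynomial ℂ, r₁.degree < (n : WithBot ℕ) ∧ r₂.degree < (n : WithBot ℕ) ∧
      ∀ x : ℂ, x ≠ 0 →
        ((2 * x - 1) * f (x + 1) + (2 * x + 1) * f (x - 1)) / (4 * x)
            = x ^ (2 * n) + r₁.eval (x ^ 2) ∧
        ((x ^ 2 + (x - 1) ^ 2) * f (x + 1) - ((x + 1) ^ 2 + x ^ 2) * f (x - 1)) / (4 * x)
            = (2 * (n : ℂ) - 1) * x ^ (2 * n) + r₂.eval (x ^ 2) := by
  refine ⟨C (1/2 : ℂ) * (ab n).1 + C (-(1/4) : ℂ) * (ab n).2 - X ^ n,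
    C (1/2 : ℂ) * (X * (ab n).2) + C (1/4 : ℂ) * (ab n).2 - C (1/2 : ℂ) * (ab n).1
      - C (2 * (n : ℂ) - 1) * X ^ n, ?_, ?_, ?_⟩
  · -- degree r₁ < n
    apply degree_lt_of
    · refine (degree_sub_le _ _).trans (max_le ((degree_add_le _ _).trans (max_le ?_ ?_)) ?_)
      · exact (degCmul _ _).trans (ab_deg n).1
      · exact (degCmul _ _).trans (ab_deg n).2.le
      · exact degree_X_pow_le n
    · have hb : (ab n).2.coeff n = 0 := coeff_eq_zero_of_degree_lt (ab_deg n).2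
      simp only [coeff_sub, coeff_add, coeff_C_mul, ab_coeff_a n, hb, coeff_X_pow]
      norm_num
  · -- degree r₂ < n
    apply degree_lt_of
    · refine (degree_sub_le _ _).trans (max_le ((degree_sub_le _ _).trans
        (max_le ((degree_add_le _ _).trans (max_le ?_ ?_)) ?_)) ?_)
      · refine (degCmul _ _).trans ?_
        rw [degree_mul, degree_X]
        exact withbot_aux _ _ (ab_deg n).2
      · exact (degCmul _ _).trans (ab_deg n).2.le
      · exact (degCmul _ _).trans (ab_deg n).1
      · exact (degCmul _ _).trans (degree_X_pow_le n)
    · have hb : (ab n).2.coeff n = 0 := coeff_eq_zero_of_degree_lt (ab_deg n).2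
      have hXb : (X * (ab n).2).coeff n = 4 * (n : ℂ) := by
        cases n with
        | zero => simp
        | succ m => rw [coeff_X_mul, ab_coeff_b m]; push_cast; ring
      simp only [coeff_sub, coeff_add, coeff_C_mul, ab_coeff_a n, hb, hXb, coeff_X_pow]
      norm_num; ring
  · intro x hx
    obtain ⟨hA, hB⟩ := ab_eval n x
    have h4x : (4 : ℂ) * x ≠ 0 := mul_ne_zero (by norm_num) hx
    constructor
    · rw [hf, hf, div_eq_iff h4x]
      simp only [eval_sub, eval_add, eval_mul, eval_C, eval_pow, eval_X, ← pow_mul]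
      linear_combination (2 * x) * hA - hB
    · rw [hf, hf, div_eq_iff h4x]
      simp only [eval_sub, eval_add, eval_mul, eval_C, eval_pow, eval_X, ← pow_mul]
      linear_combination (-(2 * x)) * hA + (2 * x ^ 2 + 1) * hB
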